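/- Let Γ((t,r),(s,q)) = ν ∫_{|t−s|}^{t+s} (1/√(π u)) e^{−(r−q)²/(2u)} du for ν > 0, t, s ≥ 0, r, q ∈ ℝ. Then for each fixed (t, r) ∈ ℝ⁺ × ℝ and s = t, the increment bound E[(a(t,r) − a(t,q))²] = 2(Γ((t,r),(t,r)) − Γ((t,r),(t,q))) ≤ C₁ |r − q| holds for a mean-zero Gaussian process a with covariance Γ at equal times, for some constant C₁ depending only on ν. -/

import Mathlib

open MeasureTheory Real

/-- The equal-time covariance function `Γ((t,r),(t,q)) = ν ∫₀^{2t} (1/√(πu)) e^{−(r−q)²/(2u)} du`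
of the Edwards-Wilkinson limit process. -/
noncomputable def GammaEq (ν t r q : ℝ) : ℝ :=
  ν * ∫ u in Set.Ioc (0:ℝ) (2 * t),
    (1 / Real.sqrt (Real.pi * u)) * Real.exp (-(r - q) ^ 2 / (2 * u))

lemma one_sub_exp_le_min (x : ℝ) : 1 - Real.exp (-x) ≤ min 1 x := by
  refine le_min ?_ ?_
  · have := Real.exp_pos (-x); linarith
  · have := Real.add_one_le_exp (-x); linarith

lemma sqrt_pi_inv_rpow {u : ℝ} (hu : 0 < u) :
    1 / Real.sqrt (Real.pi * u) = (Real.sqrt Real.pi)⁻¹ * u ^ (-(1/2) : ℝ) := by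
  rw [Real.sqrt_mul Real.pi_pos.le, Real.rpow_neg hu.le, ← Real.sqrt_eq_rpow, one_div, mul_inv]

lemma integrableOn_invsqrt {b : ℝ} (hb : 0 ≤ b) :
    IntegrableOn (fun u : ℝ => 1 / Real.sqrt (Real.pi * u)) (Set.Ioc 0 b) := by
  have base : IntegrableOn (fun u : ℝ => u ^ (-(1/2) : ℝ)) (Set.Ioc 0 b) := by
    have := intervalIntegral.intervalIntegrable_rpow' (a := 0) (b := b)
      (r := -(1/2)) (by norm_num)
    rwa [intervalIntegrable_iff_integrableOn_Ioc_of_le hb] at this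
  have base' : IntegrableOn (fun u : ℝ => (Real.sqrt Real.pi)⁻¹ * u ^ (-(1/2) : ℝ))
      (Set.Ioc 0 b) := base.const_mul _
  exact base'.congr_fun (fun u hu => (sqrt_pi_inv_rpow hu.1).symm) measurableSet_Ioc

lemma gamma_diff_le (ν t : ℝ) (hν : 0 < ν) (ht : 0 < t) (r q : ℝ) :
    2 * (GammaEq ν t r r - GammaEq ν t r q) ≤ (4 * ν) * |r - q| := by
  by_cases hrq : r = q
  · simp [hrq]
  have hcpos : (0:ℝ) < (r - q) ^ 2 := by
    have : r - q ≠ 0 := sub_ne_zero.mpr hrq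
    positivity
  set m : ℝ := (r - q) ^ 2 / 2 with hm
  have hmpos : 0 < m := by positivity
  set f1 : ℝ → ℝ := fun u => (1 / Real.sqrt (Real.pi * u)) * Real.exp (-(r - r) ^ 2 / (2 * u))
    with hf1
  set f2 : ℝ → ℝ := fun u => (1 / Real.sqrt (Real.pi * u)) * Real.exp (-(r - q) ^ 2 / (2 * u))
    with hf2
  set G : ℝ → ℝ := fun u =>
    (Real.sqrt Real.pi)⁻¹ * min (u ^ (-(1/2) : ℝ)) (m * u ^ (-(3/2) : ℝ)) with hG
  have hb : (0:ℝ) ≤ 2 * t := by linarith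
  have hI0 : IntegrableOn (fun u : ℝ => 1 / Real.sqrt (Real.pi * u)) (Set.Ioc 0 (2*t)) :=
    integrableOn_invsqrt hb
  have hnn : ∀ u : ℝ, 0 ≤ 1 / Real.sqrt (Real.pi * u) := fun u => by positivity
  have hI1 : IntegrableOn f1 (Set.Ioc 0 (2*t)) := by
    refine hI0.congr_fun (fun u hu => ?_) measurableSet_Ioc
    simp [hf1]
  have hI2 : IntegrableOn f2 (Set.Ioc 0 (2*t)) := by
    refine Integrable.mono hI0 ?_ ?_
    · apply Measurable.aestronglyMeasurable
      fun_prop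
    · filter_upwards [ae_restrict_mem measurableSet_Ioc] with u hu
      have hu0 : (0:ℝ) < u := hu.1
      rw [Real.norm_eq_abs, Real.norm_eq_abs, abs_of_nonneg (hnn u),
        abs_of_nonneg (mul_nonneg (hnn u) (Real.exp_pos _).le)]
      have hexp : Real.exp (-(r - q) ^ 2 / (2 * u)) ≤ 1 := by
        rw [← Real.exp_zero]
        apply Real.exp_le_exp.mpr
        rw [neg_div]
        exact neg_nonpos.mpr (by positivity)
      nlinarith [hnn u]
  -- the key algebraic identity for the min
  have hmineq : ∀ u : ℝ, 0 < u →
      u ^ (-(1/2) : ℝ) * min 1 (m / u)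
        = min (u ^ (-(1/2) : ℝ)) (m * u ^ (-(3/2) : ℝ)) := by
    intro u hu0
    have hpow : u ^ (-(1/2) : ℝ) * (m / u) = m * u ^ (-(3/2) : ℝ) := by
      have hdiv : m / u = m * u ^ (-1 : ℝ) := by
        rw [Real.rpow_neg hu0.le, Real.rpow_one]
        exact div_eq_mul_inv m u
      rw [hdiv, ← mul_assoc, mul_comm (u ^ (-(1/2) : ℝ)) m, mul_assoc, ← Real.rpow_add hu0]
      norm_num
    rw [mul_min_of_nonneg _ _ (Real.rpow_nonneg hu0.le _), mul_one, hpow]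
  -- pointwise bound on (0, 2t]
  have hpt : ∀ u ∈ Set.Ioc (0:ℝ) (2*t), f1 u - f2 u ≤ G u := by
    intro u hu
    have hu0 : (0:ℝ) < u := hu.1
    have hfact : f1 u - f2 u
        = (1 / Real.sqrt (Real.pi * u)) * (1 - Real.exp (-((r - q) ^ 2 / (2 * u)))) := by
      simp only [hf1, hf2]
      rw [neg_div]
      ring_nf
      simp
    rw [hfact]
    have h2 : (1 / Real.sqrt (Real.pi * u)) * (1 - Real.exp (-((r - q) ^ 2 / (2 * u))))
        ≤ (1 / Real.sqrt (Real.pi * u)) * min 1 ((r - q) ^ 2 / (2 * u)) :=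
      mul_le_mul_of_nonneg_left (one_sub_exp_le_min _) (hnn u)
    refine h2.trans ?_
    have hmu : (r - q) ^ 2 / (2 * u) = m / u := by rw [hm]; ring
    rw [sqrt_pi_inv_rpow hu0, hmu, hG, mul_assoc, hmineq u hu0]
  -- nonnegativity of G on (0, ∞)
  have hGnn : ∀ u ∈ Set.Ioi (0:ℝ), 0 ≤ G u := by
    intro u hu
    have hu0 : (0:ℝ) < u := hu
    rw [hG]
    exact mul_nonneg (by positivity)
      (le_min (Real.rpow_nonneg hu0.le _)
        (mul_nonneg hmpos.le (Real.rpow_nonneg hu0.le _)))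
  -- G on (0, m]
  have hGeq1 : Set.EqOn G (fun u : ℝ => (Real.sqrt Real.pi)⁻¹ * u ^ (-(1/2) : ℝ))
      (Set.Ioc 0 m) := by
    intro u hu
    have hu0 : (0:ℝ) < u := hu.1
    have h3 : u * u ^ (-(3/2) : ℝ) = u ^ (-(1/2) : ℝ) := by
      nth_rewrite 1 [← Real.rpow_one u]
      rw [← Real.rpow_add hu0]; norm_num
    have hle : u ^ (-(1/2) : ℝ) ≤ m * u ^ (-(3/2) : ℝ) := by
      calc u ^ (-(1/2) : ℝ) = u * u ^ (-(3/2) : ℝ) := h3.symm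
        _ ≤ m * u ^ (-(3/2) : ℝ) :=
          mul_le_mul_of_nonneg_right hu.2 (Real.rpow_nonneg hu0.le _)
    simp only [hG, min_eq_left hle]
  -- G on (m, ∞)
  have hGeq2 : Set.EqOn G (fun u : ℝ => (Real.sqrt Real.pi)⁻¹ * (m * u ^ (-(3/2) : ℝ)))
      (Set.Ioi m) := by
    intro u hu
    have hu0 : (0:ℝ) < u := hmpos.trans hu
    have h3 : u * u ^ (-(3/2) : ℝ) = u ^ (-(1/2) : ℝ) := by
      nth_rewrite 1 [← Real.rpow_one u]
      rw [← Real.rpow_add hu0]; norm_num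
    have hle : m * u ^ (-(3/2) : ℝ) ≤ u ^ (-(1/2) : ℝ) := by
      calc m * u ^ (-(3/2) : ℝ) ≤ u * u ^ (-(3/2) : ℝ) :=
          mul_le_mul_of_nonneg_right (le_of_lt hu) (Real.rpow_nonneg hu0.le _)
        _ = u ^ (-(1/2) : ℝ) := h3
    simp only [hG, min_eq_right hle]
  -- integrability of G on the pieces
  have hIG1 : IntegrableOn G (Set.Ioc 0 m) := by
    have base : IntegrableOn (fun u : ℝ => u ^ (-(1/2) : ℝ)) (Set.Ioc 0 m) := by
      have := intervalIntegral.intervalIntegrable_rpow' (a := 0) (b := m)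
        (r := -(1/2)) (by norm_num)
      rwa [intervalIntegrable_iff_integrableOn_Ioc_of_le hmpos.le] at this
    have base' : IntegrableOn (fun u : ℝ => (Real.sqrt Real.pi)⁻¹ * u ^ (-(1/2) : ℝ))
        (Set.Ioc 0 m) := base.const_mul _
    exact base'.congr_fun (fun u hu => (hGeq1 hu).symm) measurableSet_Ioc
  have hIG2 : IntegrableOn G (Set.Ioi m) := by
    have base : IntegrableOn (fun u : ℝ => u ^ (-(3/2) : ℝ)) (Set.Ioi m) :=
      integrableOn_Ioi_rpow_of_lt (by norm_num) hmpos
    have base' : IntegrableOn (fun u : ℝ => (Real.sqrt Real.pi)⁻¹ * (m * u ^ (-(3/2) : ℝ)))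
        (Set.Ioi m) := (base.const_mul m).const_mul _
    exact base'.congr_fun (fun u hu => (hGeq2 hu).symm) measurableSet_Ioi
  have hsplitset : Set.Ioc (0:ℝ) m ∪ Set.Ioi m = Set.Ioi 0 := Set.Ioc_union_Ioi_eq_Ioi hmpos.le
  have hIG : IntegrableOn G (Set.Ioi 0) := by
    rw [← hsplitset]; exact hIG1.union hIG2
  -- values of the two pieces
  have hval1 : ∫ u in Set.Ioc (0:ℝ) m, G u
      = (Real.sqrt Real.pi)⁻¹ * (2 * Real.sqrt m) := by
    rw [setIntegral_congr_fun measurableSet_Ioc hGeq1, integral_const_mul]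
    congr 1
    rw [← intervalIntegral.integral_of_le hmpos.le,
      integral_rpow (Or.inl (by norm_num))]
    have e1 : (-(1/2:ℝ) + 1) = 1/2 := by norm_num
    rw [e1, Real.zero_rpow (by norm_num), Real.sqrt_eq_rpow, sub_zero]
    ring
  have hval2 : ∫ u in Set.Ioi m, G u
      = (Real.sqrt Real.pi)⁻¹ * (2 * Real.sqrt m) := by
    rw [setIntegral_congr_fun measurableSet_Ioi hGeq2, integral_const_mul, integral_const_mul,
      integral_Ioi_rpow_of_lt (by norm_num) hmpos]
    congr 1
    have e1 : (-(3/2:ℝ) + 1) = -(1/2) := by norm_num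
    rw [e1]
    have e2 : m * m ^ (-(1/2) : ℝ) = Real.sqrt m := by
      nth_rewrite 1 [← Real.rpow_one m]
      rw [← Real.rpow_add hmpos, Real.sqrt_eq_rpow]
      norm_num
    calc m * (-m ^ (-(1/2) : ℝ) / (-(1/2))) = 2 * (m * m ^ (-(1/2) : ℝ)) := by ring
      _ = 2 * Real.sqrt m := by rw [e2]
  -- assemble the integral bound
  have hchain : ∫ u in Set.Ioc (0:ℝ) (2*t), (f1 u - f2 u)
      ≤ (Real.sqrt Real.pi)⁻¹ * (4 * Real.sqrt m) := by
    have step1 : ∫ u in Set.Ioc (0:ℝ) (2*t), (f1 u - f2 u)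
        ≤ ∫ u in Set.Ioc (0:ℝ) (2*t), G u := by
      refine setIntegral_mono_on (hI1.sub hI2) (hIG.mono_set ?_) measurableSet_Ioc hpt
      exact Set.Ioc_subset_Ioi_self
    have step2 : ∫ u in Set.Ioc (0:ℝ) (2*t), G u ≤ ∫ u in Set.Ioi (0:ℝ), G u := by
      refine setIntegral_mono_set hIG ?_ ?_
      · filter_upwards [ae_restrict_mem measurableSet_Ioi] with u hu using hGnn u hu
      · exact (Set.Ioc_subset_Ioi_self).eventuallyLE
    have step3 : ∫ u in Set.Ioi (0:ℝ), G u
        = (Real.sqrt Real.pi)⁻¹ * (4 * Real.sqrt m) := by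
      rw [← hsplitset, setIntegral_union (Set.Ioc_disjoint_Ioi le_rfl) measurableSet_Ioi
        hIG1 hIG2, hval1, hval2]
      ring
    linarith [step1, step2, step3.le]
  -- unfold GammaEq
  have hGamma : GammaEq ν t r r - GammaEq ν t r q
      = ν * ∫ u in Set.Ioc (0:ℝ) (2*t), (f1 u - f2 u) := by
    rw [GammaEq, GammaEq, ← mul_sub, integral_sub hI1 hI2]
  rw [hGamma]
  -- final numeric estimates
  have hsqm : Real.sqrt m = |r - q| / Real.sqrt 2 := by
    rw [hm, Real.sqrt_div (sq_nonneg _), Real.sqrt_sq_eq_abs]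
  have h2pi : 2 ≤ Real.sqrt 2 * Real.sqrt Real.pi := by
    rw [← Real.sqrt_mul (by norm_num) Real.pi]
    have h4 : (4:ℝ) ≤ 2 * Real.pi := by nlinarith [Real.pi_gt_three]
    calc (2:ℝ) = Real.sqrt 4 := by
          rw [show (4:ℝ) = 2^2 by norm_num, Real.sqrt_sq (by norm_num)]
      _ ≤ Real.sqrt (2 * Real.pi) := Real.sqrt_le_sqrt h4
  have hd : 0 ≤ |r - q| := abs_nonneg _
  have hbound : (Real.sqrt Real.pi)⁻¹ * (4 * Real.sqrt m) ≤ 2 * |r - q| := by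
    rw [hsqm]
    have hsp : 0 < Real.sqrt Real.pi := Real.sqrt_pos.mpr Real.pi_pos
    have hs2 : 0 < Real.sqrt 2 := by positivity
    have heq : (Real.sqrt Real.pi)⁻¹ * (4 * (|r - q| / Real.sqrt 2))
        = 4 * |r - q| / (Real.sqrt 2 * Real.sqrt Real.pi) := by
      field_simp
    rw [heq, div_le_iff₀ (by positivity)]
    nlinarith [h2pi, hd]
  have hΔ := hchain.trans hbound
  have hfin := mul_le_mul_of_nonneg_left hΔ hν.le
  linarith [hfin]

/-- For a mean-zero (square-integrable) process `a(t,·)` with equal-time covariance `Γ`,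
the increment bound `E[(a(t,r) − a(t,q))²] = 2(Γ((t,r),(t,r)) − Γ((t,r),(t,q))) ≤ C₁|r − q|`
holds for some constant `C₁ > 0` depending only on `ν`. -/
theorem increment_bound {Ω : Type*} [MeasurableSpace Ω] (P : Measure Ω)
    [IsProbabilityMeasure P] (ν t : ℝ) (hν : 0 < ν) (ht : 0 < t)
    (a : ℝ → Ω → ℝ) (hL2 : ∀ r : ℝ, MemLp (a r) 2 P)
    (hcov : ∀ r q : ℝ, ∫ ω, a r ω * a q ω ∂P = GammaEq ν t r q) :
    (∀ r q : ℝ, ∫ ω, (a r ω - a q ω) ^ 2 ∂P = 2 * (GammaEq ν t r r - GammaEq ν t r q)) ∧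
    ∃ C₁ > 0, ∀ r q : ℝ, ∫ ω, (a r ω - a q ω) ^ 2 ∂P ≤ C₁ * |r - q| := by
  have hint : ∀ r q : ℝ, Integrable (fun ω => a r ω * a q ω) P := by
    intro r q
    have h := (hL2 q).smul (hL2 r) (p := 2) (q := 2) (r := 1)
    rw [memLp_one_iff_integrable] at h
    exact h
  have hGsymm : ∀ r q : ℝ, GammaEq ν t q q = GammaEq ν t r r := by
    intro r q; simp [GammaEq]
  have heq : ∀ r q : ℝ, ∫ ω, (a r ω - a q ω) ^ 2 ∂P
      = 2 * (GammaEq ν t r r - GammaEq ν t r q) := by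
    intro r q
    have hexp : (fun ω => (a r ω - a q ω) ^ 2)
        = fun ω => (a r ω * a r ω - 2 * (a r ω * a q ω)) + a q ω * a q ω := by
      funext ω; ring
    have e1 : ∫ ω, (a r ω - a q ω) ^ 2 ∂P
        = (∫ ω, (a r ω * a r ω - 2 * (a r ω * a q ω)) ∂P) + ∫ ω, a q ω * a q ω ∂P := by
      rw [hexp]
      exact integral_add ((hint r r).sub ((hint r q).const_mul 2)) (hint q q)
    have e2 : ∫ ω, (a r ω * a r ω - 2 * (a r ω * a q ω)) ∂P
        = (∫ ω, a r ω * a r ω ∂P) - ∫ ω, 2 * (a r ω * a q ω) ∂P :=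
      integral_sub (hint r r) ((hint r q).const_mul 2)
    have e3 : ∫ ω, 2 * (a r ω * a q ω) ∂P = 2 * ∫ ω, a r ω * a q ω ∂P :=
      integral_const_mul 2 _
    rw [e1, e2, e3, hcov r r, hcov r q, hcov q q, hGsymm r q]
    ring
  refine ⟨heq, ⟨4 * ν, by positivity, fun r q => ?_⟩⟩
  rw [heq r q]
  exact gamma_diff_le ν t hν ht r q
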